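/- arXiv:2211.00164 — 2 statements merged into one kernel-verified Lean document; each statement's English description precedes it below -/
import Mathlib

section
/- Invariance of the multi-step inverse model at the latent level: for every exo-free policy π : S → PMF A, every k ≥ 1, every (s,e) ∈ S × E, every a ∈ A and every (s',e') ∈ S × E, if Σ_{a''∈A} π(s)(a'') * Pz^k((s,e),a'')((s',e')) > 0, then [π(s)(a) * Pz^k((s,e),a)((s',e'))] / [Σ_{a''∈A} π(s)(a'') * Pz^k((s,e),a'')((s',e'))] = [π(s)(a) * Ps^k(s,a)(s')] / [Σ_{a''∈A} π(s)(a'') * Ps^k(s,a'')(s')]; in particular, the conditional probability of the first action given the latent states at times t and t+k depends only on their controller components (s, s') and not on the exogenous components (e, e'). -/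
open scoped ENNReal BigOperators

/-- The `k`-step controller kernel (index `k : ℕ` represents `k+1` steps). -/
noncomputable def Psk {S A : Type*} (Ts : S → A → PMF S) (π : S → PMF A) :
    ℕ → S → A → PMF S
  | 0 => Ts
  | k + 1 => fun s a => (Ts s a).bind fun s1 => (π s1).bind fun a1 => Psk Ts π k s1 a1

/-- The `k`-step exogenous kernel (index `k : ℕ` represents `k+1` steps). -/
noncomputable def Tek {E : Type*} (Te : E → PMF E) : ℕ → E → PMF E
  | 0 => Te
  | k + 1 => fun e => (Te e).bind (Tek Te k)

/-- The `k`-step joint kernel (index `k : ℕ` represents `k+1` steps). -/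
noncomputable def Pzk {S E A : Type*} (T : S × E → A → PMF (S × E)) (π : S → PMF A) :
    ℕ → S × E → A → PMF (S × E)
  | 0 => T
  | k + 1 => fun z a => (T z a).bind fun z1 => (π z1.1).bind fun a1 => Pzk T π k z1 a1

lemma Pzk_factor {S E A : Type*}
    (Ts : S → A → PMF S) (Te : E → PMF E) (T : S × E → A → PMF (S × E))
    (hT : ∀ (s : S) (e : E) (a : A) (s' : S) (e' : E),
      T (s, e) a (s', e') = Ts s a s' * Te e e')
    (π : S → PMF A) :
    ∀ (k : ℕ) (s : S) (e : E) (a : A) (s' : S) (e' : E),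
      Pzk T π k (s, e) a (s', e') = Psk Ts π k s a s' * Tek Te k e e' := by
  intro k
  induction k with
  | zero => intro s e a s' e'; exact hT s e a s' e'
  | succ k ih =>
    intro s e a s' e'
    simp only [Pzk, Psk, Tek, PMF.bind_apply]
    rw [ENNReal.tsum_prod']
    have : ∀ s1 e1, T (s, e) a (s1, e1) *
        ∑' a1, π s1 a1 * Pzk T π k (s1, e1) a1 (s', e') =
        (Ts s a s1 * ∑' a1, π s1 a1 * Psk Ts π k s1 a1 s') *
          (Te e e1 * Tek Te k e1 e') := by
      intro s1 e1
      rw [hT]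
      have : (∑' a1, π s1 a1 * Pzk T π k (s1, e1) a1 (s', e')) =
          (∑' a1, π s1 a1 * Psk Ts π k s1 a1 s') * Tek Te k e1 e' := by
        rw [← ENNReal.tsum_mul_right]
        congr 1; ext a1; rw [ih s1 e1 a1 s' e', mul_assoc]
      rw [this]; ring
    simp_rw [this]
    rw [← ENNReal.tsum_mul_right]
    congr 1; ext s1
    rw [ENNReal.tsum_mul_left]

/-- Invariance of the multi-step inverse model at the latent level: the conditional probability
of the first action given the latent states at times `t` and `t+k` depends only on the
controller components `(s, s')` and not on the exogenous components `(e, e')`. -/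
theorem multi_step_inverse_model_latent_invariance
    {S E A : Type*} [Fintype S] [Fintype E] [Fintype A]
    [Nonempty S] [Nonempty E] [Nonempty A]
    (Ts : S → A → PMF S) (Te : E → PMF E)
    (T : S × E → A → PMF (S × E))
    (hT : ∀ (s : S) (e : E) (a : A) (s' : S) (e' : E),
      T (s, e) a (s', e') = Ts s a s' * Te e e')
    (π : S → PMF A) (k : ℕ) (s : S) (e : E) (a : A) (s' : S) (e' : E)
    (hpos : 0 < ∑ a'' : A, π s a'' * Pzk T π k (s, e) a'' (s', e')) :
    (π s a * Pzk T π k (s, e) a (s', e')) /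
        (∑ a'' : A, π s a'' * Pzk T π k (s, e) a'' (s', e')) =
      (π s a * Psk Ts π k s a s') /
        (∑ a'' : A, π s a'' * Psk Ts π k s a'' s') := by
  have hfac := Pzk_factor Ts Te T hT π k
  set X := Tek Te k e e' with hX
  have hXne : X ≠ 0 := by
    intro h0
    apply hpos.ne'
    refine Finset.sum_eq_zero fun a'' _ => ?_
    rw [hfac s e a'' s' e', ← hX, h0, mul_zero, mul_zero]
  have hXtop : X ≠ ⊤ := PMF.apply_ne_top _ _
  have hsum : (∑ a'' : A, π s a'' * Pzk T π k (s, e) a'' (s', e')) =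
      (∑ a'' : A, π s a'' * Psk Ts π k s a'' s') * X := by
    rw [Finset.sum_mul]
    refine Finset.sum_congr rfl fun a'' _ => ?_
    rw [hfac s e a'' s' e', ← hX, mul_assoc]
  rw [hsum, hfac s e a s' e', ← hX, ← mul_assoc,
    ENNReal.mul_div_mul_right _ _ hXne hXtop]
end

section
/- Invariance Lemma (the multi-step inverse model is invariant to exogenous information): for every exo-free policy π : S → PMF A, every initial distribution μ0 : PMF Z, every k ≥ 1, all observations x, x' ∈ X and every action a ∈ A, if Σ_{a''∈A} μ^k(x, a'', x') > 0, then μ^k(x, a, x') / Σ_{a''∈A} μ^k(x, a'', x') = [π(φ⋆(x))(a) * Ps^k(φ⋆(x), a)(φ⋆(x'))] / [Σ_{a''∈A} π(φ⋆(x))(a'') * Ps^k(φ⋆(x), a'')(φ⋆(x'))]. In particular, the conditional probability P_π(a_t = a | x_t = x, x_{t+k} = x') depends on the observations only through their controller representations (φ⋆(x), φ⋆(x')). -/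
open scoped ENNReal BigOperators

/-- The joint PMF `μ^k` on `X × A × X` of the triple `(x_t, a_t, x_{t+k})`:
sample `z ~ μ0`, `x ~ q z`, `a ~ π (φ⋆ x)`, `z' ~ Pzk T π k z a`, `x' ~ q z'`. -/
noncomputable def muk {S E A X : Type*} (T : S × E → A → PMF (S × E)) (π : S → PMF A)
    (q : S × E → PMF X) (ψ : X → S × E) (μ0 : PMF (S × E)) (k : ℕ) :
    PMF (X × A × X) :=
  μ0.bind fun z => (q z).bind fun x => (π (ψ x).1).bind fun a =>
    (Pzk T π k z a).bind fun z' => (q z').map fun x' => (x, a, x')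

lemma pmf_bind_apply_fintype {α β : Type*} [Fintype α] (p : PMF α) (f : α → PMF β) (b : β) :
    p.bind f b = ∑ a, p a * f a b := by rw [PMF.bind_apply, tsum_fintype]

lemma Pzk_fact {S E A : Type*} [Fintype S] [Fintype E] [Fintype A]
    (Ts : S → A → PMF S) (Te : E → PMF E)
    (T : S × E → A → PMF (S × E))
    (hT : ∀ (s : S) (e : E) (a : A) (s' : S) (e' : E),
      T (s, e) a (s', e') = Ts s a s' * Te e e')
    (π : S → PMF A) :
    ∀ (k : ℕ) (s : S) (e : E) (a : A) (s' : S) (e' : E),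
      Pzk T π k (s, e) a (s', e') = Psk Ts π k s a s' * Tek Te k e e' := by
  intro k
  induction k with
  | zero => intro s e a s' e'; simpa [Pzk, Psk, Tek] using hT s e a s' e'
  | succ k ih =>
    intro s e a s' e'
    show ((T (s,e) a).bind fun z1 => (π z1.1).bind fun a1 => Pzk T π k z1 a1) (s', e')
        = ((Ts s a).bind fun s1 => (π s1).bind fun a1 => Psk Ts π k s1 a1) s' *
          ((Te e).bind (Tek Te k)) e'
    simp only [pmf_bind_apply_fintype]
    rw [Finset.sum_mul_sum]
    rw [Fintype.sum_prod_type]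
    refine Finset.sum_congr rfl fun s1 _ => Finset.sum_congr rfl fun e1 _ => ?_
    simp only [hT, ih, ← mul_assoc]
    rw [← Finset.sum_mul]
    ring

lemma muk_apply {S E A X : Type*} [Fintype S] [Fintype E] [Fintype A] [Fintype X]
    (T : S × E → A → PMF (S × E)) (π : S → PMF A)
    (q : S × E → PMF X) (ψ : X → S × E)
    (hψ : ∀ (z : S × E) (x : X), x ∈ (q z).support → ψ x = z)
    (μ0 : PMF (S × E)) (k : ℕ) (x x' : X) (a : A) :
    muk T π q ψ μ0 k (x, a, x') =
      μ0 (ψ x) * (q (ψ x) x * (π (ψ x).1 a *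
        (Pzk T π k (ψ x) a (ψ x') * q (ψ x') x'))) := by
  classical
  simp only [muk, PMF.bind_apply, PMF.map_apply]
  have h1 : ∀ (z' : S × E) (x0 : X) (a0 : A),
      (∑' x'', @ite _ (((x:X), a, x') = (x0, a0, x'')) (Classical.propDecidable _) (q z' x'') 0)
        = if x0 = x ∧ a0 = a then q z' x' else 0 := by
    intro z' x0 a0
    by_cases h : x0 = x ∧ a0 = a
    · obtain ⟨rfl, rfl⟩ := h
      rw [if_pos ⟨rfl, rfl⟩, tsum_eq_single x']
      · simp
      · intro b hb; simp [Prod.ext_iff, Ne.symm hb]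
    · rw [if_neg h]
      apply ENNReal.tsum_eq_zero.2
      intro b
      have : ¬ ((x, a, x') = (x0, a0, b)) := by
        rintro ⟨⟩; exact h ⟨rfl, rfl⟩
      simp [this]
  have h2 : ∀ (z : S × E) (x0 : X),
      (∑' a0, π (ψ x0).1 a0 * ∑' z', Pzk T π k z a0 z' *
          ∑' x'', @ite _ (((x:X), a, x') = (x0, a0, x'')) (Classical.propDecidable _) (q z' x'') 0)
        = if x0 = x then π (ψ x).1 a * ∑' z', Pzk T π k z a z' * q z' x' else 0 := by
    intro z x0
    have step : ∀ a0 : A,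
        (∑' z', Pzk T π k z a0 z' * ∑' x'', @ite _ (((x:X), a, x') = (x0, a0, x'')) (Classical.propDecidable _) (q z' x'') 0)
          = ∑' z', Pzk T π k z a0 z' * if x0 = x ∧ a0 = a then q z' x' else 0 :=
      fun a0 => tsum_congr fun z' => by rw [h1 z' x0 a0]
    rw [tsum_congr fun a0 => by rw [step a0]]
    by_cases hx : x0 = x
    · subst hx
      rw [tsum_eq_single a]
      · simp
      · intro b hb; simp [hb]
    · rw [if_neg hx]
      apply ENNReal.tsum_eq_zero.2
      intro b
      simp [hx]
  have h3 : ∀ (z : S × E),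
      (∑' x0, q z x0 * ∑' a0, π (ψ x0).1 a0 * ∑' z', Pzk T π k z a0 z' *
          ∑' x'', @ite _ (((x:X), a, x') = (x0, a0, x'')) (Classical.propDecidable _) (q z' x'') 0)
        = q z x * (π (ψ x).1 a * ∑' z', Pzk T π k z a z' * q z' x') := by
    intro z
    rw [tsum_congr fun x0 => by rw [h2 z x0]]
    rw [tsum_eq_single x]
    · simp
    · intro b hb; simp [hb]
  rw [tsum_congr fun z => by rw [h3 z]]
  have side1 : ∀ (z : S × E), z ≠ ψ x →
      μ0 z * (q z x * (π (ψ x).1 a * ∑' z', Pzk T π k z a z' * q z' x')) = 0 := by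
    intro z hz
    by_cases h : q z x = 0
    · simp [h]
    · exact absurd (hψ z x (by simpa [PMF.mem_support_iff] using h)).symm hz
  have side2 : ∀ (z' : S × E), z' ≠ ψ x' → Pzk T π k (ψ x) a z' * q z' x' = 0 := by
    intro z' hz'
    by_cases h : q z' x' = 0
    · simp [h]
    · exact absurd (hψ z' x' (by simpa [PMF.mem_support_iff] using h)).symm hz'
  rw [tsum_eq_single (ψ x) side1, tsum_eq_single (ψ x') side2]

/-- Invariance Lemma: the multi-step inverse model is invariant to exogenous information.
The conditional probability `P_π(a_t = a | x_t = x, x_{t+k} = x')` depends on the observations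
only through their controller representations `(φ⋆ x, φ⋆ x')`, where `φ⋆ x = (ψ x).1`. -/
theorem multi_step_inverse_model_invariance
    {S E A X : Type*} [Fintype S] [Fintype E] [Fintype A] [Fintype X]
    [Nonempty S] [Nonempty E] [Nonempty A] [Nonempty X]
    (Ts : S → A → PMF S) (Te : E → PMF E)
    (T : S × E → A → PMF (S × E))
    (hT : ∀ (s : S) (e : E) (a : A) (s' : S) (e' : E),
      T (s, e) a (s', e') = Ts s a s' * Te e e')
    (π : S → PMF A)
    (q : S × E → PMF X)
    (hq : ∀ z z' : S × E, z ≠ z' → Disjoint (q z).support (q z').support)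
    (ψ : X → S × E)
    (hψ : ∀ (z : S × E) (x : X), x ∈ (q z).support → ψ x = z)
    (μ0 : PMF (S × E)) (k : ℕ) (x x' : X) (a : A)
    (hpos : 0 < ∑ a'' : A, muk T π q ψ μ0 k (x, a'', x')) :
    (muk T π q ψ μ0 k (x, a, x')) / (∑ a'' : A, muk T π q ψ μ0 k (x, a'', x')) =
      (π (ψ x).1 a * Psk Ts π k (ψ x).1 a (ψ x').1) /
        (∑ a'' : A, π (ψ x).1 a'' * Psk Ts π k (ψ x).1 a'' (ψ x').1) := by
  set C : ℝ≥0∞ := μ0 (ψ x) * (q (ψ x) x * (Tek Te k (ψ x).2 (ψ x').2 * q (ψ x') x')) with hC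
  have key : ∀ a'' : A, muk T π q ψ μ0 k (x, a'', x') =
      C * (π (ψ x).1 a'' * Psk Ts π k (ψ x).1 a'' (ψ x').1) := by
    intro a''
    rw [muk_apply T π q ψ hψ μ0 k x x' a'']
    rw [show Pzk T π k (ψ x) a'' (ψ x')
        = Psk Ts π k (ψ x).1 a'' (ψ x').1 * Tek Te k (ψ x).2 (ψ x').2 by
      simpa using Pzk_fact Ts Te T hT π k (ψ x).1 (ψ x).2 a'' (ψ x').1 (ψ x').2]
    rw [hC]; ring
  simp only [key] at hpos ⊢
  rw [← Finset.mul_sum] at hpos ⊢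
  have hC0 : C ≠ 0 := by
    intro h; rw [h, zero_mul] at hpos; exact lt_irrefl 0 hpos
  have hCt : C ≠ ⊤ := by
    refine ENNReal.mul_ne_top (PMF.apply_ne_top _ _) (ENNReal.mul_ne_top (PMF.apply_ne_top _ _)
      (ENNReal.mul_ne_top (PMF.apply_ne_top _ _) (PMF.apply_ne_top _ _)))
  exact ENNReal.mul_div_mul_left _ _ hC0 hCt
end
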